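/- Let ∇ be a Type A connection on ℝ² whose Ricci tensor ρ (a constant symmetric 2×2 matrix) has rank one, i.e. ρ ≠ 0 and det ρ = 0. For a vector X = (X¹,X²) with ρ(X,X) ≠ 0 set α_X = (Σ_{i,j,k} ρ_{jk;i} X^i X^j X^k)² / ρ(X,X)³ and ε_X = sign(ρ(X,X)). Then for any two vectors X, Y with ρ(X,X) ≠ 0 and ρ(Y,Y) ≠ 0 one has α_X = α_Y and ε_X = ε_Y. -/
import Mathlib


noncomputable section

/-- Ricci tensor of the Type A connection on ℝ² with constant Christoffel symbols
`Γ i j k = Γ_{ij}^k`:  `ρ_{jk} = Σ_{i,p} (Γ_{ip}^i Γ_{jk}^p − Γ_{jp}^i Γ_{ik}^p)`. -/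
def ricciA (Γ : Fin 2 → Fin 2 → Fin 2 → ℝ) (j k : Fin 2) : ℝ :=
  ∑ i, ∑ q, (Γ i q i * Γ j k q - Γ j q i * Γ i k q)

/-- Components `ρ_{jk;i}` of the covariant derivative of the Ricci tensor. -/
def nablaRicciA (Γ : Fin 2 → Fin 2 → Fin 2 → ℝ) (i j k : Fin 2) : ℝ :=
  -∑ l, (Γ i j l * ricciA Γ l k + Γ i k l * ricciA Γ j l)

/-- `ρ(X,X)` for a tangent vector `X`. -/
def rhoQF (Γ : Fin 2 → Fin 2 → Fin 2 → ℝ) (X : Fin 2 → ℝ) : ℝ :=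
  ∑ j, ∑ k, ricciA Γ j k * X j * X k

/-- `∇ρ(X,X;X)` for a tangent vector `X`. -/
def nablaRhoQF (Γ : Fin 2 → Fin 2 → Fin 2 → ℝ) (X : Fin 2 → ℝ) : ℝ :=
  ∑ i, ∑ j, ∑ k, nablaRicciA Γ i j k * X i * X j * X k

/-- if the Ricci tensor of a Type A connection has rank one, then
`α_X = ∇ρ(X,X;X)²/ρ(X,X)³` and `ε_X = sign ρ(X,X)` do not depend on the choice of a
vector `X` with `ρ(X,X) ≠ 0`. -/
private lemma helper (a A rX nX sX rY nY sY : ℝ) (ha : a ≠ 0) (hX : rX ≠ 0) (hY : rY ≠ 0)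
    (h1X : sX ^ 2 = a * rX) (h1Y : sY ^ 2 = a * rY)
    (h2X : a ^ 3 * nX = -2 * A * sX ^ 3) (h2Y : a ^ 3 * nY = -2 * A * sY ^ 3) :
    nX ^ 2 / rX ^ 3 = nY ^ 2 / rY ^ 3 ∧ Real.sign rX = Real.sign rY := by
  constructor
  · rw [div_eq_div_iff (pow_ne_zero 3 hX) (pow_ne_zero 3 hY)]
    have H : a ^ 9 * (nX ^ 2 * rY ^ 3) = a ^ 9 * (nY ^ 2 * rX ^ 3) := by
      linear_combination (a^3*nX - 2*A*sX^3)*(a*rY)^3 * h2X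
        - (a^3*nY - 2*A*sY^3)*(a*rX)^3 * h2Y
        + 4*A^2*sY^6*((a*rX)^2 + a*rX*sX^2 + sX^4) * h1X
        - 4*A^2*sX^6*((a*rY)^2 + a*rY*sY^2 + sY^4) * h1Y
    exact mul_left_cancel₀ (pow_ne_zero 9 ha) H
  · have hsX : sX ≠ 0 := fun h => (mul_ne_zero ha hX) (by rw [← h1X, h]; ring)
    have hsY : sY ≠ 0 := fun h => (mul_ne_zero ha hY) (by rw [← h1Y, h]; ring)
    have pX : 0 < sX ^ 2 := by positivity
    have pY : 0 < sY ^ 2 := by positivity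
    rcases ha.lt_or_gt with h | h
    · have hx : rX < 0 := by nlinarith
      have hy : rY < 0 := by nlinarith
      rw [Real.sign_of_neg hx, Real.sign_of_neg hy]
    · have hx : 0 < rX := by nlinarith
      have hy : 0 < rY := by nlinarith
      rw [Real.sign_of_pos hx, Real.sign_of_pos hy]

private lemma keyA (Γ : Fin 2 → Fin 2 → Fin 2 → ℝ) (hΓ : ∀ i j k, Γ i j k = Γ j i k)
    (hdet : ricciA Γ 0 0 * ricciA Γ 1 1 - ricciA Γ 0 1 * ricciA Γ 1 0 = 0) (Z : Fin 2 → ℝ) :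
    ricciA Γ 0 0 ^ 3 * nablaRhoQF Γ Z =
      -2 * (Γ 0 0 0 * ricciA Γ 0 0 + Γ 0 0 1 * ricciA Γ 0 1) *
        (ricciA Γ 0 0 * Z 0 + ricciA Γ 0 1 * Z 1) ^ 3 := by
  simp only [nablaRhoQF, nablaRicciA, ricciA, Fin.sum_univ_two] at hdet ⊢
  simp only [hΓ 1 0] at hdet ⊢
  linear_combination ((-2)*Γ 0 1 1 ^ 4*Γ 1 1 1*Z 1 ^ 3 + (-6)*Γ 0 1 1 ^ 5*Z 0*Z 1 ^ 2 + (2)*Γ 0 1 0*Γ 0 1 1 ^ 4*Z 1 ^ 3 + (4)*Γ 0 0 1*Γ 0 1 1 ^ 2*Γ 1 1 1 ^ 2*Z 1 ^ 3 + (12)*Γ 0 0 1*Γ 0 1 1 ^ 3*Γ 1 1 1*Z 0*Z 1 ^ 2 + (-2)*Γ 0 0 1*Γ 0 1 1 ^ 3*Γ 1 1 0*Z 1 ^ 3 + (-6)*Γ 0 0 1*Γ 0 1 1 ^ 4*Z 0 ^ 2*Z 1 + (-6)*Γ 0 0 1*Γ 0 1 0*Γ 0 1 1 ^ 2*Γ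 1 1 1*Z 1 ^ 3 + (-6)*Γ 0 0 1*Γ 0 1 0*Γ 0 1 1 ^ 3*Z 0*Z 1 ^ 2 + (-2)*Γ 0 0 1 ^ 2*Γ 1 1 1 ^ 3*Z 1 ^ 3 + (-6)*Γ 0 0 1 ^ 2*Γ 0 1 1*Γ 1 1 1 ^ 2*Z 0*Z 1 ^ 2 + (2)*Γ 0 0 1 ^ 2*Γ 0 1 1*Γ 1 1 0*Γ 1 1 1*Z 1 ^ 3 + (12)*Γ 0 0 1 ^ 2*Γ 0 1 1 ^ 2*Γ 1 1 1*Z 0 ^ 2*Z 1 + (-6)*Γ 0 0 1 ^ 2*Γ 0 1 1 ^ 2*Γ 1 1 0*Z 0*Z 1 ^ 2 + (4)*Γ 0 0 1 ^ 2*Γ 0 1 0*Γ 1 1 1 ^ 2*Z 1 ^ 3 + (6)*Γ 0 0 1 ^ 2*Γ 0 1 0*Γ 0 1 1*Γ 1 1 1*Z 0*Z 1 ^ 2 + (2)*Γ 0 0 1 ^ 2*Γ 0 1 0*Γ 0 1 1*Γ 1 1 0*Z 1 ^ 3 + (-12)*Γ 0 0 1 ^ 2*Γ 0 1 0*Γ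 0 1 1 ^ 2*Z 0 ^ 2*Z 1 + (-2)*Γ 0 0 1 ^ 2*Γ 0 1 0 ^ 2*Γ 1 1 1*Z 1 ^ 3 + (-6)*Γ 0 0 1 ^ 3*Γ 1 1 1 ^ 2*Z 0 ^ 2*Z 1 + (6)*Γ 0 0 1 ^ 3*Γ 1 1 0*Γ 1 1 1*Z 0*Z 1 ^ 2 + (-2)*Γ 0 0 1 ^ 3*Γ 1 1 0 ^ 2*Z 1 ^ 3 + (12)*Γ 0 0 1 ^ 3*Γ 0 1 0*Γ 1 1 1*Z 0 ^ 2*Z 1 + (-6)*Γ 0 0 1 ^ 3*Γ 0 1 0*Γ 1 1 0*Z 0*Z 1 ^ 2 + (-6)*Γ 0 0 1 ^ 3*Γ 0 1 0 ^ 2*Z 0 ^ 2*Z 1 + (4)*Γ 0 0 0*Γ 0 1 1 ^ 3*Γ 1 1 1*Z 1 ^ 3 + (12)*Γ 0 0 0*Γ 0 1 1 ^ 4*Z 0*Z 1 ^ 2 + (-2)*Γ 0 0 0*Γ 0 1 0*Γ 0 1 1 ^ 3*Z 1 ^ 3 + (-4)*Γ 0 0 0*Γ 0 0 1*Γ 0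 1 1*Γ 1 1 1 ^ 2*Z 1 ^ 3 + (-12)*Γ 0 0 0*Γ 0 0 1*Γ 0 1 1 ^ 2*Γ 1 1 1*Z 0*Z 1 ^ 2 + (2)*Γ 0 0 0*Γ 0 0 1*Γ 0 1 1 ^ 2*Γ 1 1 0*Z 1 ^ 3 + (12)*Γ 0 0 0*Γ 0 0 1*Γ 0 1 1 ^ 3*Z 0 ^ 2*Z 1 + (4)*Γ 0 0 0*Γ 0 0 1*Γ 0 1 0*Γ 0 1 1*Γ 1 1 1*Z 1 ^ 3 + (6)*Γ 0 0 0*Γ 0 0 1*Γ 0 1 0*Γ 0 1 1 ^ 2*Z 0*Z 1 ^ 2 + (-12)*Γ 0 0 0*Γ 0 0 1 ^ 2*Γ 0 1 1*Γ 1 1 1*Z 0 ^ 2*Z 1 + (6)*Γ 0 0 0*Γ 0 0 1 ^ 2*Γ 0 1 1*Γ 1 1 0*Z 0*Z 1 ^ 2 + (12)*Γ 0 0 0*Γ 0 0 1 ^ 2*Γ 0 1 0*Γ 0 1 1*Z 0 ^ 2*Z 1 + (-2)*Γ 0 0 0 ^ 2*Γ 0 1 1 ^ 2*Γ 1 1 1*Z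 1 ^ 3 + (-6)*Γ 0 0 0 ^ 2*Γ 0 1 1 ^ 3*Z 0*Z 1 ^ 2 + (-6)*Γ 0 0 0 ^ 2*Γ 0 0 1*Γ 0 1 1 ^ 2*Z 0 ^ 2*Z 1) * hdet

private lemma keyB (Γ : Fin 2 → Fin 2 → Fin 2 → ℝ) (hΓ : ∀ i j k, Γ i j k = Γ j i k)
    (hdet : ricciA Γ 0 0 * ricciA Γ 1 1 - ricciA Γ 0 1 * ricciA Γ 1 0 = 0) (Z : Fin 2 → ℝ) :
    ricciA Γ 1 1 ^ 3 * nablaRhoQF Γ Z =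
      -2 * (Γ 1 1 0 * ricciA Γ 0 1 + Γ 1 1 1 * ricciA Γ 1 1) *
        (ricciA Γ 0 1 * Z 0 + ricciA Γ 1 1 * Z 1) ^ 3 := by
  simp only [nablaRhoQF, nablaRicciA, ricciA, Fin.sum_univ_two] at hdet ⊢
  simp only [hΓ 1 0] at hdet ⊢
  linear_combination ((-6)*Γ 0 1 1 ^ 2*Γ 1 1 0 ^ 3*Z 0*Z 1 ^ 2 + (12)*Γ 0 1 0*Γ 0 1 1*Γ 1 1 0 ^ 2*Γ 1 1 1*Z 0*Z 1 ^ 2 + (-6)*Γ 0 1 0 ^ 2*Γ 1 1 0*Γ 1 1 1 ^ 2*Z 0*Z 1 ^ 2 + (6)*Γ 0 1 0 ^ 2*Γ 0 1 1*Γ 1 1 0*Γ 1 1 1*Z 0 ^ 2*Z 1 + (-12)*Γ 0 1 0 ^ 2*Γ 0 1 1*Γ 1 1 0 ^ 2*Z 0*Z 1 ^ 2 + (-6)*Γ 0 1 0 ^ 3*Γ 1 1 1 ^ 2*Z 0 ^ 2*Z 1 + (12)*Γ 0 1 0 ^ 3*Γ 1 1 0*Γ 1 1 1*Z 0*Z 1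 ^ 2 + (-2)*Γ 0 1 0 ^ 3*Γ 0 1 1*Γ 1 1 1*Z 0 ^ 3 + (-6)*Γ 0 1 0 ^ 3*Γ 0 1 1*Γ 1 1 0*Z 0 ^ 2*Z 1 + (12)*Γ 0 1 0 ^ 4*Γ 1 1 1*Z 0 ^ 2*Z 1 + (-6)*Γ 0 1 0 ^ 4*Γ 1 1 0*Z 0*Z 1 ^ 2 + (2)*Γ 0 1 0 ^ 4*Γ 0 1 1*Z 0 ^ 3 + (-6)*Γ 0 1 0 ^ 5*Z 0 ^ 2*Z 1 + (-6)*Γ 0 0 1*Γ 0 1 1*Γ 1 1 0 ^ 3*Z 0 ^ 2*Z 1 + (6)*Γ 0 0 1*Γ 0 1 0*Γ 1 1 0 ^ 2*Γ 1 1 1*Z 0 ^ 2*Z 1 + (2)*Γ 0 0 1*Γ 0 1 0*Γ 0 1 1*Γ 1 1 0 ^ 2*Z 0 ^ 3 + (2)*Γ 0 0 1*Γ 0 1 0 ^ 2*Γ 1 1 0*Γ 1 1 1*Z 0 ^ 3 + (-6)*Γ 0 0 1*Γ 0 1 0 ^ 2*Γ 1 1 0 ^ 2*Z 0 ^ 2*Z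 1 + (-2)*Γ 0 0 1*Γ 0 1 0 ^ 3*Γ 1 1 0*Z 0 ^ 3 + (-2)*Γ 0 0 1 ^ 2*Γ 1 1 0 ^ 3*Z 0 ^ 3 + (12)*Γ 0 0 0*Γ 0 1 1*Γ 1 1 0 ^ 3*Z 0*Z 1 ^ 2 + (-2)*Γ 0 0 0*Γ 0 1 1 ^ 2*Γ 1 1 0 ^ 2*Z 0 ^ 3 + (-12)*Γ 0 0 0*Γ 0 1 0*Γ 1 1 0 ^ 2*Γ 1 1 1*Z 0*Z 1 ^ 2 + (4)*Γ 0 0 0*Γ 0 1 0*Γ 0 1 1*Γ 1 1 0*Γ 1 1 1*Z 0 ^ 3 + (6)*Γ 0 0 0*Γ 0 1 0*Γ 0 1 1*Γ 1 1 0 ^ 2*Z 0 ^ 2*Z 1 + (-2)*Γ 0 0 0*Γ 0 1 0 ^ 2*Γ 1 1 1 ^ 2*Z 0 ^ 3 + (-12)*Γ 0 0 0*Γ 0 1 0 ^ 2*Γ 1 1 0*Γ 1 1 1*Z 0 ^ 2*Z 1 + (12)*Γ 0 0 0*Γ 0 1 0 ^ 2*Γ 1 1 0 ^ 2*Z 0*Z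 1 ^ 2 + (-6)*Γ 0 0 0*Γ 0 1 0 ^ 2*Γ 0 1 1*Γ 1 1 0*Z 0 ^ 3 + (4)*Γ 0 0 0*Γ 0 1 0 ^ 3*Γ 1 1 1*Z 0 ^ 3 + (12)*Γ 0 0 0*Γ 0 1 0 ^ 3*Γ 1 1 0*Z 0 ^ 2*Z 1 + (-2)*Γ 0 0 0*Γ 0 1 0 ^ 4*Z 0 ^ 3 + (6)*Γ 0 0 0*Γ 0 0 1*Γ 1 1 0 ^ 3*Z 0 ^ 2*Z 1 + (2)*Γ 0 0 0*Γ 0 0 1*Γ 0 1 0*Γ 1 1 0 ^ 2*Z 0 ^ 3 + (-6)*Γ 0 0 0 ^ 2*Γ 1 1 0 ^ 3*Z 0*Z 1 ^ 2 + (4)*Γ 0 0 0 ^ 2*Γ 0 1 1*Γ 1 1 0 ^ 2*Z 0 ^ 3 + (-4)*Γ 0 0 0 ^ 2*Γ 0 1 0*Γ 1 1 0*Γ 1 1 1*Z 0 ^ 3 + (-6)*Γ 0 0 0 ^ 2*Γ 0 1 0*Γ 1 1 0 ^ 2*Z 0 ^ 2*Z 1 + (4)*Γ 0 0 0 ^ 2*Γ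 0 1 0 ^ 2*Γ 1 1 0*Z 0 ^ 3 + (-2)*Γ 0 0 0 ^ 3*Γ 1 1 0 ^ 2*Z 0 ^ 3) * hdet

theorem stmt2 (Γ : Fin 2 → Fin 2 → Fin 2 → ℝ)
    (hΓ : ∀ i j k, Γ i j k = Γ j i k)
    (hρ : ¬ ∀ j k, ricciA Γ j k = 0)
    (hdet : ricciA Γ 0 0 * ricciA Γ 1 1 - ricciA Γ 0 1 * ricciA Γ 1 0 = 0)
    (X Y : Fin 2 → ℝ) (hX : rhoQF Γ X ≠ 0) (hY : rhoQF Γ Y ≠ 0) :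
    (nablaRhoQF Γ X) ^ 2 / (rhoQF Γ X) ^ 3 = (nablaRhoQF Γ Y) ^ 2 / (rhoQF Γ Y) ^ 3 ∧
    Real.sign (rhoQF Γ X) = Real.sign (rhoQF Γ Y) := by
  have hsym : ricciA Γ 1 0 = ricciA Γ 0 1 := by
    simp only [ricciA, Fin.sum_univ_two]
    simp only [hΓ 1 0]
    ring
  have hdet' : ricciA Γ 0 0 * ricciA Γ 1 1 - ricciA Γ 0 1 * ricciA Γ 0 1 = 0 := by
    linear_combination hdet + ricciA Γ 0 1 * hsym
  have hrho : ∀ Z : Fin 2 → ℝ, rhoQF Γ Z =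
      ricciA Γ 0 0 * Z 0 * Z 0 + ricciA Γ 0 1 * Z 0 * Z 1 +
        ricciA Γ 0 1 * Z 1 * Z 0 + ricciA Γ 1 1 * Z 1 * Z 1 := fun Z => by
    simp only [rhoQF, Fin.sum_univ_two, hsym]; ring
  by_cases ha : ricciA Γ 0 0 = 0
  · have hb : ricciA Γ 0 1 = 0 := by
      have h2 : ricciA Γ 0 1 * ricciA Γ 0 1 = 0 := by
        linear_combination ricciA Γ 1 1 * ha - hdet'
      exact mul_self_eq_zero.mp h2
    have hc : ricciA Γ 1 1 ≠ 0 := by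
      intro hc
      apply hX
      rw [hrho X, ha, hb, hc]; ring
    refine helper (ricciA Γ 1 1) (Γ 1 1 0 * ricciA Γ 0 1 + Γ 1 1 1 * ricciA Γ 1 1)
      (rhoQF Γ X) (nablaRhoQF Γ X) (ricciA Γ 0 1 * X 0 + ricciA Γ 1 1 * X 1)
      (rhoQF Γ Y) (nablaRhoQF Γ Y) (ricciA Γ 0 1 * Y 0 + ricciA Γ 1 1 * Y 1)
      hc hX hY ?_ ?_ (keyB Γ hΓ hdet X) (keyB Γ hΓ hdet Y)
    · rw [hrho X]; linear_combination (-(X 0 ^ 2)) * hdet'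
    · rw [hrho Y]; linear_combination (-(Y 0 ^ 2)) * hdet'
  · refine helper (ricciA Γ 0 0) (Γ 0 0 0 * ricciA Γ 0 0 + Γ 0 0 1 * ricciA Γ 0 1)
      (rhoQF Γ X) (nablaRhoQF Γ X) (ricciA Γ 0 0 * X 0 + ricciA Γ 0 1 * X 1)
      (rhoQF Γ Y) (nablaRhoQF Γ Y) (ricciA Γ 0 0 * Y 0 + ricciA Γ 0 1 * Y 1)
      ha hX hY ?_ ?_ (keyA Γ hΓ hdet X) (keyA Γ hΓ hdet Y)
    · rw [hrho X]; linear_combination (-(X 1 ^ 2)) * hdet'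
    · rw [hrho Y]; linear_combination (-(Y 1 ^ 2)) * hdet'
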